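/- arXiv:0802.2544 — 6 statements merged into one kernel-verified Lean document; each statement's English description precedes it below -/
import Mathlib

section
/- For every t ∈ ℝ there exist a constant c ∈ ℝ and a derivation D of the Lie algebra (ℝ⁹, μ_t) such that the Ricci operator satisfies Ric_{μ_t} = c·I + D (i.e., the canonical inner product is a nilsoliton metric on n_t = (ℝ⁹, μ_t), so n_t is an Einstein nilradical). -/
open Matrix Finset Real Filter

noncomputable section

/-- The canonical basis vector `eᵢ` of `ℝ⁹` (0-indexed: `e 0 = e₁`, …, `e 8 = e₉`). -/
def e (i : Fin 9) : Fin 9 → ℝ := Pi.single i 1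

/-- Half of the structure constants of `μ_t` (before antisymmetrization):
`μ_t(e₅,e₄)=e₇, μ_t(e₁,e₆)=e₈, μ_t(e₃,e₂)=e₉, μ_t(e₃,e₆)=t e₇, μ_t(e₅,e₂)=t e₈, μ_t(e₁,e₄)=t e₉`. -/
def muHalf (t : ℝ) (i j k : Fin 9) : ℝ :=
  (if i = 4 ∧ j = 3 ∧ k = 6 then (1:ℝ) else 0) +
  (if i = 0 ∧ j = 5 ∧ k = 7 then (1:ℝ) else 0) +
  (if i = 2 ∧ j = 1 ∧ k = 8 then (1:ℝ) else 0) +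
  (if i = 2 ∧ j = 5 ∧ k = 6 then t else 0) +
  (if i = 4 ∧ j = 1 ∧ k = 7 then t else 0) +
  (if i = 0 ∧ j = 3 ∧ k = 8 then t else 0)

/-- The (antisymmetric) structure constants of `μ_t`. -/
def muC (t : ℝ) (i j k : Fin 9) : ℝ := muHalf t i j k - muHalf t j i k

/-- The two-step nilpotent Lie bracket `μ_t` on `ℝ⁹`. -/
def mu (t : ℝ) (X Y : Fin 9 → ℝ) : Fin 9 → ℝ :=
  fun k => ∑ i, ∑ j, X i * Y j * muC t i j k

/-- Structure constants of `μ̃_t`: those of `μ_t` plus `μ̃_t(e₁,e₂)=e₇`. -/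
def muTildeHalf (t : ℝ) (i j k : Fin 9) : ℝ :=
  muHalf t i j k + (if i = 0 ∧ j = 1 ∧ k = 6 then (1:ℝ) else 0)

def muTildeC (t : ℝ) (i j k : Fin 9) : ℝ := muTildeHalf t i j k - muTildeHalf t j i k

/-- The two-step nilpotent Lie bracket `μ̃_t` on `ℝ⁹`. -/
def muTilde (t : ℝ) (X Y : Fin 9 → ℝ) : Fin 9 → ℝ :=
  fun k => ∑ i, ∑ j, X i * Y j * muTildeC t i j k

/-- Structure constants of `μ̄_t`: those of `μ̃_t` plus `μ̄_t(e₃,e₄)=e₈`. -/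
def muBarHalf (t : ℝ) (i j k : Fin 9) : ℝ :=
  muTildeHalf t i j k + (if i = 2 ∧ j = 3 ∧ k = 7 then (1:ℝ) else 0)

def muBarC (t : ℝ) (i j k : Fin 9) : ℝ := muBarHalf t i j k - muBarHalf t j i k

/-- The two-step nilpotent Lie bracket `μ̄_t` on `ℝ⁹`. -/
def muBar (t : ℝ) (X Y : Fin 9 → ℝ) : Fin 9 → ℝ :=
  fun k => ∑ i, ∑ j, X i * Y j * muBarC t i j k

/-- The space of (skew-symmetric bilinear) bracket candidates on `ℝ⁹`,
represented as bare functions. -/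
abbrev NilBracket := (Fin 9 → ℝ) → (Fin 9 → ℝ) → Fin 9 → ℝ

/-- The Ricci operator of `(ℝ⁹, ν)` w.r.t. the canonical inner product, as a matrix in the
canonical basis:
`⟨Ric_ν X, Y⟩ = -(1/2)∑ᵢⱼ⟨ν(X,eᵢ),eⱼ⟩⟨ν(Y,eᵢ),eⱼ⟩ + (1/4)∑ᵢⱼ⟨ν(eᵢ,eⱼ),X⟩⟨ν(eᵢ,eⱼ),Y⟩`. -/
def ric (ν : NilBracket) : Matrix (Fin 9) (Fin 9) ℝ :=
  fun a b =>
    -(1/2) * (∑ i, ∑ j, ν (e a) (e i) j * ν (e b) (e i) j)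
    + (1/4) * (∑ i, ∑ j, ν (e i) (e j) a * ν (e i) (e j) b)

/-- `D` is a derivation of the algebra `(ℝ⁹, ν)`. -/
def IsDerivation (ν : NilBracket) (D : Matrix (Fin 9) (Fin 9) ℝ) : Prop :=
  ∀ X Y : Fin 9 → ℝ, D.mulVec (ν X Y) = ν (D.mulVec X) Y + ν X (D.mulVec Y)

/-- The basis `e₁,…,e₆` of `v = span(e₁,…,e₆) ⊆ ℝ⁹`, indexed by `Fin 6`. -/
def E (a : Fin 6) : Fin 9 → ℝ := e (Fin.castLE (by norm_num) a)

/-- The skew-symmetric 6×6 matrix `J_ν(w)`, `w = x e₇ + y e₈ + z e₉`, defined by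
`⟨J_ν(w) v₁, v₂⟩ = ⟨ν(v₁,v₂), w⟩` for `v₁,v₂ ∈ span(e₁,…,e₆)`. -/
def Jmat (ν : NilBracket) (x y z : ℝ) : Matrix (Fin 6) (Fin 6) ℝ :=
  fun a b => ν (E b) (E a) 6 * x + ν (E b) (E a) 7 * y + ν (E b) (E a) 8 * z

/-- The `GL₉(ℝ)` action on brackets: `(g·ν)(X,Y) = g ν(g⁻¹X, g⁻¹Y)`. -/
def act (g : Matrix (Fin 9) (Fin 9) ℝ) (ν : NilBracket) : NilBracket :=
  fun X Y => g.mulVec (ν (g⁻¹.mulVec X) (g⁻¹.mulVec Y))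

/-- The algebras `(ℝ⁹, ν)` and `(ℝ⁹, ν')` are isomorphic:
there is `g ∈ GL₉(ℝ)` with `g ν(X,Y) = ν'(gX, gY)` for all `X, Y`. -/
def LieIso (ν ν' : NilBracket) : Prop :=
  ∃ g : Matrix (Fin 9) (Fin 9) ℝ, IsUnit g ∧
    ∀ X Y : Fin 9 → ℝ, g.mulVec (ν X Y) = ν' (g.mulVec X) (g.mulVec Y)

theorem sum9' (f : Fin 9 → ℝ) : ∑ i, f i = f 0 + f 1 + f 2 + f 3 + f 4 + f 5 + f 6 + f 7 + f 8 := by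
  simp [Fin.sum_univ_succ]
  norm_num [Fin.succ, Fin.ext_iff, add_assoc]

theorem mu_e' (t : ℝ) (a b : Fin 9) (k : Fin 9) : mu t (e a) (e b) k = muC t a b k := by
  simp [mu, e, Pi.single_apply]

theorem ric_mu_apply (t : ℝ) (a b : Fin 9) :
    ric (mu t) a b =
      -(1/2) * (∑ i, ∑ j, muC t a i j * muC t b i j)
      + (1/4) * (∑ i, ∑ j, muC t i j a * muC t i j b) := by
  simp [ric, mu_e']

theorem ric_mu_eq (t : ℝ) (a b : Fin 9) :
    ric (mu t) a b =
      (if a = b then (if a.val < 6 then -(1+t^2)/2 else (1+t^2)/2) else 0) := by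
  rw [ric_mu_apply]
  simp only [sum9']
  simp [muC, muHalf]
  fin_cases a <;> fin_cases b <;> simp <;> ring

def dvec (t : ℝ) : Fin 9 → ℝ :=
  ![1+t^2, 1+t^2, 1+t^2, 1+t^2, 1+t^2, 1+t^2, 2*(1+t^2), 2*(1+t^2), 2*(1+t^2)]

theorem dvec0 (t : ℝ) : dvec t 0 = 1+t^2 := rfl
theorem dvec1 (t : ℝ) : dvec t 1 = 1+t^2 := rfl
theorem dvec2 (t : ℝ) : dvec t 2 = 1+t^2 := rfl
theorem dvec3 (t : ℝ) : dvec t 3 = 1+t^2 := rfl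
theorem dvec4 (t : ℝ) : dvec t 4 = 1+t^2 := rfl
theorem dvec5 (t : ℝ) : dvec t 5 = 1+t^2 := rfl
theorem dvec6 (t : ℝ) : dvec t 6 = 2*(1+t^2) := rfl
theorem dvec7 (t : ℝ) : dvec t 7 = 2*(1+t^2) := rfl
theorem dvec8 (t : ℝ) : dvec t 8 = 2*(1+t^2) := rfl

theorem dvec0' (t : ℝ) : dvec t ⟨0, by norm_num⟩ = 1+t^2 := rfl
theorem dvec1' (t : ℝ) : dvec t ⟨1, by norm_num⟩ = 1+t^2 := rfl
theorem dvec2' (t : ℝ) : dvec t ⟨2, by norm_num⟩ = 1+t^2 := rfl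
theorem dvec3' (t : ℝ) : dvec t ⟨3, by norm_num⟩ = 1+t^2 := rfl
theorem dvec4' (t : ℝ) : dvec t ⟨4, by norm_num⟩ = 1+t^2 := rfl
theorem dvec5' (t : ℝ) : dvec t ⟨5, by norm_num⟩ = 1+t^2 := rfl
theorem dvec6' (t : ℝ) : dvec t ⟨6, by norm_num⟩ = 2*(1+t^2) := rfl
theorem dvec7' (t : ℝ) : dvec t ⟨7, by norm_num⟩ = 2*(1+t^2) := rfl
theorem dvec8' (t : ℝ) : dvec t ⟨8, by norm_num⟩ = 2*(1+t^2) := rfl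

/-- For every `t ∈ ℝ`, the canonical inner product is a nilsoliton metric on
`n_t = (ℝ⁹, μ_t)`: there are `c ∈ ℝ` and a derivation `D` of `(ℝ⁹, μ_t)` with
`Ric_{μ_t} = c·I + D`. -/
theorem statement0 (t : ℝ) :
    ∃ (c : ℝ) (D : Matrix (Fin 9) (Fin 9) ℝ), IsDerivation (mu t) D ∧
      ric (mu t) = c • (1 : Matrix (Fin 9) (Fin 9) ℝ) + D := by
  refine ⟨-(3*(1+t^2)/2), Matrix.diagonal (dvec t), ?_, ?_⟩
  · intro X Y
    funext k
    show (Matrix.diagonal _).mulVec _ k = mu t _ Y k + mu t X _ k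
    simp only [Matrix.mulVec_diagonal, mu, Pi.add_apply]
    simp only [sum9']
    simp only [muC, muHalf]
    simp [dvec0, dvec1, dvec2, dvec3, dvec4, dvec5, dvec6, dvec7, dvec8]
    fin_cases k <;>
      simp [dvec0, dvec1, dvec2, dvec3, dvec4, dvec5, dvec6, dvec7, dvec8] <;> ring
  · ext a b
    rw [ric_mu_eq]
    simp only [Matrix.add_apply, Matrix.smul_apply, Matrix.one_apply, smul_eq_mul]
    by_cases h : a = b
    · subst h
      rw [Matrix.diagonal_apply_eq]
      fin_cases a <;>
        norm_num [dvec0, dvec1, dvec0', dvec1', dvec2', dvec3', dvec4', dvec5', dvec6', dvec7', dvec8'] <;> ring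
    · rw [Matrix.diagonal_apply_ne _ h]
      simp [h]
end
end

section
/- For every t ∈ ℝ and all x,y,z ∈ ℝ, the determinant of the 6×6 matrix J_{μ̃_t}(x·e₇ + y·e₈ + z·e₉) equals (t·x³ − (t³+1)·xyz)² (equivalently, the Pfaffian form of ñ_t = (ℝ⁹, μ̃_t) is f_{μ̃_t}(x,y,z) = t·x³ − (t³+1)·xyz up to sign). -/
open Matrix Finset Real Filter

noncomputable section

lemma muTilde_e (t : ℝ) (b a : Fin 9) (k : Fin 9) :
    muTilde t (e b) (e a) k = muTildeC t b a k := by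
  simp [muTilde, e, Pi.single_apply, ite_mul, Finset.sum_ite_eq]

set_option maxHeartbeats 4000000 in
set_option maxRecDepth 40000 in
/-- `det J_{μ̃_t}(x e₇ + y e₈ + z e₉) = (t x³ - (t³+1) xyz)²`. -/
theorem statement9 (t x y z : ℝ) :
    (Jmat (muTilde t) x y z).det = (t*x^3 - (t^3+1)*(x*y*z))^2 := by
  have h : Jmat (muTilde t) x y z =
      !![0, -x, 0, -(t*z), 0, -y;
         x, 0, z, 0, t*y, 0;
         0, -z, 0, 0, 0, -(t*x);
         t*z, 0, 0, 0, x, 0;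
         0, -(t*y), 0, -x, 0, 0;
         y, 0, t*x, 0, 0, 0] := by
    ext a b
    fin_cases a <;> fin_cases b <;>
      simp (config := { decide := true }) only [Jmat, E, muTilde_e, muTildeC, muTildeHalf,
        muHalf, Matrix.of_apply, Matrix.cons_val_zero, Matrix.cons_val_succ',
        Matrix.cons_val_fin_one, if_true, if_false, and_self, and_false, false_and] <;>
      norm_num [Matrix.cons_val_succ', Matrix.cons_val_zero, Matrix.cons_val_fin_one]
  rw [h]
  simp only [Matrix.det_succ_row_zero, Fin.sum_univ_succ, Matrix.submatrix_apply,
    Fin.zero_succAbove, Fin.succ_succAbove_zero, Fin.succ_succAbove_succ,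
    Matrix.cons_val_zero, Matrix.cons_val_succ, Matrix.cons_val', Matrix.cons_val_fin_one,
    Matrix.head_cons, Matrix.head_fin_const, Matrix.of_apply, Fin.val_zero, Fin.val_succ,
    Finset.univ_unique, Finset.sum_singleton, Fin.default_eq_zero, pow_zero, pow_succ,
    mul_zero, zero_mul, mul_one, one_mul, neg_mul, mul_neg, neg_neg, add_zero, zero_add,
    neg_zero, sub_zero, zero_sub, one_smul, Matrix.det_fin_zero, Matrix.det_fin_one]
  ring
end
end

section
/- For every t ∈ (1,∞), the Lie algebras n_t = (ℝ⁹, μ_t) and ñ_t = (ℝ⁹, μ̃_t) are not isomorphic. -/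
open Matrix Finset Real Filter

noncomputable section

/-! ### Auxiliary material for `statement11` -/

namespace Statement11Aux

lemma fs1 : (0 : Fin 8).succ = (1 : Fin 9) := rfl
lemma fs2 : ((0 : Fin 7).succ).succ = (2 : Fin 9) := rfl
lemma fs3 : (((0 : Fin 6).succ).succ).succ = (3 : Fin 9) := rfl
lemma fs4 : ((((0 : Fin 5).succ).succ).succ).succ = (4 : Fin 9) := rfl
lemma fs5 : (((((0 : Fin 4).succ).succ).succ).succ).succ = (5 : Fin 9) := rfl
lemma fs6 : ((((((0 : Fin 3).succ).succ).succ).succ).succ).succ = (6 : Fin 9) := rfl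
lemma fs7 : (((((((0 : Fin 2).succ).succ).succ).succ).succ).succ).succ = (7 : Fin 9) := rfl
lemma fs8 : ((((((((0 : Fin 1).succ).succ).succ).succ).succ).succ).succ).succ = (8 : Fin 9) := rfl

set_option maxHeartbeats 2000000 in
/-- Closed form of the bracket `μ_t`. -/
lemma mu_apply (t : ℝ) (X Y : Fin 9 → ℝ) (k : Fin 9) :
    mu t X Y k =
      if k = 6 then X 4*Y 3 - X 3*Y 4 + t*(X 2*Y 5 - X 5*Y 2)
      else if k = 7 then X 0*Y 5 - X 5*Y 0 + t*(X 4*Y 1 - X 1*Y 4)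
      else if k = 8 then X 2*Y 1 - X 1*Y 2 + t*(X 0*Y 3 - X 3*Y 0) else 0 := by
  fin_cases k <;>
  · simp (config := { decide := true }) only [mu, muC, muHalf, Fin.sum_univ_succ,
      Finset.sum_empty, if_true, if_false, fs1, fs2, fs3, fs4, fs5, fs6, fs7, fs8]
    ring

set_option maxHeartbeats 2000000 in
/-- Closed form of the bracket `μ̃_t`. -/
lemma muTilde_apply (t : ℝ) (X Y : Fin 9 → ℝ) (k : Fin 9) :
    muTilde t X Y k =
      if k = 6 then X 4*Y 3 - X 3*Y 4 + t*(X 2*Y 5 - X 5*Y 2) + (X 0*Y 1 - X 1*Y 0)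
      else if k = 7 then X 0*Y 5 - X 5*Y 0 + t*(X 4*Y 1 - X 1*Y 4)
      else if k = 8 then X 2*Y 1 - X 1*Y 2 + t*(X 0*Y 3 - X 3*Y 0) else 0 := by
  fin_cases k <;>
  · simp (config := { decide := true }) only [muTilde, muTildeC, muTildeHalf, muHalf,
      Fin.sum_univ_succ, Finset.sum_empty, if_true, if_false, fs1, fs2, fs3, fs4, fs5,
      fs6, fs7, fs8]
    ring

/-- A real quadratic vanishing at three distinct points is the zero polynomial. -/
lemma quad_eq_zero {A B C s1 s2 s3 : ℝ} (h12 : s1 ≠ s2) (h13 : s1 ≠ s3) (h23 : s2 ≠ s3)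
    (e1 : A*s1^2 + B*s1 + C = 0) (e2 : A*s2^2 + B*s2 + C = 0)
    (e3 : A*s3^2 + B*s3 + C = 0) : A = 0 ∧ B = 0 ∧ C = 0 := by
  have d12 : s1 - s2 ≠ 0 := sub_ne_zero.mpr h12
  have d13 : s1 - s3 ≠ 0 := sub_ne_zero.mpr h13
  have d23 : s2 - s3 ≠ 0 := sub_ne_zero.mpr h23
  have hA : A * ((s1 - s2) * ((s2 - s3) * (s1 - s3))) = 0 := by
    linear_combination (s2 - s3)*e1 + (s3 - s1)*e2 + (s1 - s2)*e3
  have hA0 : A = 0 := by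
    rcases mul_eq_zero.mp hA with h | h
    · exact h
    · exact absurd h (by positivity)
  have hB : B * (s1 - s2) = 0 := by
    linear_combination e1 - e2 - (s1^2 - s2^2) * hA0
  have hB0 : B = 0 := by
    rcases mul_eq_zero.mp hB with h | h
    · exact h
    · exact absurd h d12
  refine ⟨hA0, hB0, ?_⟩
  linear_combination e1 - s1^2 * hA0 - s1 * hB0

/-- The kernel of the pairing `(X,Y) ↦ x⟨μ_t(X,Y),e₇⟩ + y⟨μ_t(X,Y),e₈⟩ + z⟨μ_t(X,Y),e₉⟩`
is exactly the centre when `x*y*z ≠ 0`. -/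
lemma kernel_mu {t x y z : ℝ} (ht : 0 < t) (hx : x ≠ 0) (hy : y ≠ 0) (hz : z ≠ 0)
    (w : Fin 9 → ℝ)
    (h : ∀ j : Fin 9, x * mu t w (e j) 6 + y * mu t w (e j) 7 + z * mu t w (e j) 8 = 0) :
    w 0 = 0 ∧ w 1 = 0 ∧ w 2 = 0 ∧ w 3 = 0 ∧ w 4 = 0 ∧ w 5 = 0 := by
  have ht' : t ≠ 0 := ne_of_gt ht
  have hc : (1:ℝ) + t^3 ≠ 0 := by positivity
  have E0 := h 0; have E1 := h 1; have E2 := h 2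
  have E3 := h 3; have E4 := h 4; have E5 := h 5
  simp (config := { decide := true }) only [mu_apply, e, Pi.single_apply,
    if_true, if_false] at E0 E1 E2 E3 E4 E5
  -- E0 : -y*w5 - t*z*w3 = 0 ; E1 : t*y*w4 + z*w2 = 0 ; E2 : -t*x*w5 - z*w1 = 0
  -- E3 : x*w4 + t*z*w0 = 0 ; E4 : -x*w3 - t*y*w1 = 0 ; E5 : t*x*w2 + y*w0 = 0
  have hw0 : w 0 = 0 := by
    have h' : ((1 + t^3) * (y * z)) * w 0 = 0 := by
      linear_combination z*E5 - t*x*E1 + t^2*y*E3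
    rcases mul_eq_zero.mp h' with h'' | h''
    · exact absurd h'' (mul_ne_zero hc (mul_ne_zero hy hz))
    · exact h''
  have hw2 : w 2 = 0 := by
    have h' : (t * x) * w 2 = 0 := by linear_combination E5 - y * hw0
    rcases mul_eq_zero.mp h' with h'' | h''
    · exact absurd h'' (mul_ne_zero ht' hx)
    · exact h''
  have hw4 : w 4 = 0 := by
    have h' : x * w 4 = 0 := by linear_combination E3 - t*z*hw0
    rcases mul_eq_zero.mp h' with h'' | h''
    · exact absurd h'' hx
    · exact h''
  have hw5 : w 5 = 0 := by
    have h' : ((1 + t^3) * (x * y)) * w 5 = 0 := by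
      linear_combination -x*E0 + t*z*E4 - t^2*y*E2
    rcases mul_eq_zero.mp h' with h'' | h''
    · exact absurd h'' (mul_ne_zero hc (mul_ne_zero hx hy))
    · exact h''
  have hw1 : w 1 = 0 := by
    have h' : z * w 1 = 0 := by linear_combination -E2 - t*x*hw5
    rcases mul_eq_zero.mp h' with h'' | h''
    · exact absurd h'' hz
    · exact h''
  have hw3 : w 3 = 0 := by
    have h' : x * w 3 = 0 := by linear_combination -E4 - t*y*hw1
    rcases mul_eq_zero.mp h' with h'' | h''
    · exact absurd h'' hx
    · exact h''
  exact ⟨hw0, hw1, hw2, hw3, hw4, hw5⟩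

end Statement11Aux

open Statement11Aux in
/-- for `t ∈ (1,∞)`, `n_t = (ℝ⁹, μ_t)` and `ñ_t = (ℝ⁹, μ̃_t)` are not
isomorphic Lie algebras. -/
theorem statement11 (t : ℝ) (ht : t ∈ Set.Ioi (1:ℝ)) :
    ¬ LieIso (mu t) (muTilde t) := by
  rintro ⟨g, hgu, hg⟩
  have ht1 : (1:ℝ) < t := ht
  have ht0 : (0:ℝ) < t := lt_trans one_pos ht1
  have htne : t ≠ 0 := ne_of_gt ht0
  have hc3 : (0:ℝ) < 1 + t^3 := by nlinarith [pow_pos ht0 3]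
  have hc3' : (1:ℝ) + t^3 ≠ 0 := ne_of_gt hc3
  have hdet : IsUnit g.det := (Matrix.isUnit_iff_isUnit_det g).mp hgu
  have hginv : g * g⁻¹ = 1 := Matrix.mul_nonsing_inv g hdet
  have hinvg : g⁻¹ * g = 1 := Matrix.nonsing_inv_mul g hdet
  have hcolentry : ∀ (c : Fin 9) (i : Fin 9), (g *ᵥ e c) i = g i c := by
    intro c i
    simp [e, Matrix.mulVec_single]
  -- the image of the centre is contained in the centre: columns 6,7,8 of `g`
  -- vanish in rows 0,…,5.
  have hkey : ∀ (a b c : Fin 9), mu t (e a) (e b) = e c →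
      ∀ i : Fin 9, i ≠ 6 → i ≠ 7 → i ≠ 8 → g i c = 0 := by
    intro a b c hab i h6 h7 h8
    have h1 : g *ᵥ e c = muTilde t (g *ᵥ e a) (g *ᵥ e b) := by
      rw [← hab]; exact hg _ _
    have h2 := hcolentry c i
    rw [h1, muTilde_apply] at h2
    rw [← h2, if_neg h6, if_neg h7, if_neg h8]
  have he6 : mu t (e 4) (e 3) = e 6 := by
    funext k
    rw [mu_apply]
    fin_cases k <;> simp (config := { decide := true }) [e, Pi.single_apply]
  have he7 : mu t (e 0) (e 5) = e 7 := by
    funext k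
    rw [mu_apply]
    fin_cases k <;> simp (config := { decide := true }) [e, Pi.single_apply]
  have he8 : mu t (e 2) (e 1) = e 8 := by
    funext k
    rw [mu_apply]
    fin_cases k <;> simp (config := { decide := true }) [e, Pi.single_apply]
  have hgcol : ∀ c : Fin 9, c = 6 ∨ c = 7 ∨ c = 8 →
      ∀ i : Fin 9, i ≠ 6 → i ≠ 7 → i ≠ 8 → g i c = 0 := by
    rintro c (rfl | rfl | rfl)
    · exact hkey 4 3 6 he6
    · exact hkey 0 5 7 he7
    · exact hkey 2 1 8 he8
  -- the one-parameter family of covectors and kernel vectors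
  set cv : ℝ → (Fin 9 → ℝ) := fun s k =>
    if k = 6 then s*(1+t^3) else if k = 7 then -(t*s^2) else if k = 8 then -(1+t^3) else 0
    with hcv
  set uv : ℝ → (Fin 9 → ℝ) := fun s k =>
    if k = 0 then s*(1+t^3) else if k = 2 then s^2 else if k = 4 then t*(1+t^3) else 0
    with huv
  -- `uv s` is in the kernel of the pairing associated to `μ̃_t` and `cv s`
  have hker : ∀ (s : ℝ) (Y : Fin 9 → ℝ), cv s ⬝ᵥ muTilde t (uv s) Y = 0 := by
    intro s Y
    simp (config := { decide := true }) only [dotProduct, Fin.sum_univ_succ,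
      Finset.sum_empty, muTilde_apply, hcv, huv, if_true, if_false,
      fs1, fs2, fs3, fs4, fs5, fs6, fs7, fs8]
    ring
  -- main claim: for every `s`, the product of the three centre components of
  -- `cv s ᵥ* g` vanishes.
  have main : ∀ s : ℝ, (cv s ᵥ* g) 6 * ((cv s ᵥ* g) 7 * (cv s ᵥ* g) 8) = 0 := by
    intro s
    by_contra hne
    have h6 : (cv s ᵥ* g) 6 ≠ 0 := fun h => hne (by rw [h]; ring)
    have h7 : (cv s ᵥ* g) 7 ≠ 0 := fun h => hne (by rw [h]; ring)
    have h8 : (cv s ᵥ* g) 8 ≠ 0 := fun h => hne (by rw [h]; ring)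
    set w : Fin 9 → ℝ := g⁻¹ *ᵥ uv s with hwdef
    have hgw : g *ᵥ w = uv s := by
      rw [hwdef, Matrix.mulVec_mulVec, hginv, Matrix.one_mulVec]
    have hker' : ∀ j : Fin 9,
        (cv s ᵥ* g) 6 * mu t w (e j) 6 + (cv s ᵥ* g) 7 * mu t w (e j) 7
          + (cv s ᵥ* g) 8 * mu t w (e j) 8 = 0 := by
      intro j
      have h1 : (cv s ᵥ* g) ⬝ᵥ mu t w (e j) = 0 := by
        rw [← Matrix.dotProduct_mulVec, hg w (e j), hgw]
        exact hker s _
      rw [← h1]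
      have hmu0 : ∀ k : Fin 9, k ≠ 6 → k ≠ 7 → k ≠ 8 → mu t w (e j) k = 0 := by
        intro k h6' h7' h8'
        rw [mu_apply, if_neg h6', if_neg h7', if_neg h8']
      simp only [dotProduct, Fin.sum_univ_succ, Finset.sum_empty,
        fs1, fs2, fs3, fs4, fs5, fs6, fs7, fs8]
      rw [hmu0 0 (by decide) (by decide) (by decide), hmu0 1 (by decide) (by decide) (by decide),
        hmu0 2 (by decide) (by decide) (by decide), hmu0 3 (by decide) (by decide) (by decide),
        hmu0 4 (by decide) (by decide) (by decide), hmu0 5 (by decide) (by decide) (by decide)]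
      ring
    obtain ⟨hw0, hw1, hw2, hw3, hw4, hw5⟩ := kernel_mu ht0 h6 h7 h8 w hker'
    -- now `uv s = g w` has vanishing 4-th component, a contradiction
    have hu4 : uv s 4 = 0 := by
      rw [← hgw]
      simp only [Matrix.mulVec, dotProduct, Fin.sum_univ_succ, Finset.sum_empty,
        fs1, fs2, fs3, fs4, fs5, fs6, fs7, fs8]
      rw [hw0, hw1, hw2, hw3, hw4, hw5,
        hgcol 6 (Or.inl rfl) 4 (by decide) (by decide) (by decide),
        hgcol 7 (Or.inr (Or.inl rfl)) 4 (by decide) (by decide) (by decide),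
        hgcol 8 (Or.inr (Or.inr rfl)) 4 (by decide) (by decide) (by decide)]
      ring
    have hu4' : uv s 4 = t*(1+t^3) := by
      simp (config := { decide := true }) only [huv, if_true, if_false]
    rw [hu4'] at hu4
    exact (mul_ne_zero htne hc3') hu4
  -- expand `cv s ᵥ* g` as a quadratic polynomial in `s`
  have hexp : ∀ (s : ℝ) (k : Fin 9),
      (cv s ᵥ* g) k = -(t * g 7 k) * s^2 + ((1+t^3) * g 6 k) * s + (-((1+t^3) * g 8 k)) := by
    intro s k
    simp (config := { decide := true }) only [Matrix.vecMul, dotProduct,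
      Fin.sum_univ_succ, Finset.sum_empty, hcv, if_true, if_false,
      fs1, fs2, fs3, fs4, fs5, fs6, fs7, fs8]
    ring
  classical
  -- pigeonhole: one of the three quadratics has three roots among 0,…,6
  have hchoice : ∀ i : Fin 7, ∃ k : Fin 3,
      (cv ((i:ℕ):ℝ) ᵥ* g) ((![6,7,8] : Fin 3 → Fin 9) k) = 0 := by
    intro i
    rcases mul_eq_zero.mp (main ((i:ℕ):ℝ)) with h | h'
    · exact ⟨0, by simpa using h⟩
    · rcases mul_eq_zero.mp h' with h | h
      · exact ⟨1, by simpa using h⟩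
      · exact ⟨2, by simpa using h⟩
  choose F hF using hchoice
  have hpig : ∃ k ∈ (Finset.univ : Finset (Fin 3)),
      2 < ((Finset.univ : Finset (Fin 7)).filter fun i => F i = k).card := by
    apply Finset.exists_lt_card_fiber_of_mul_lt_card_of_maps_to
    · intro a _; exact Finset.mem_univ _
    · simp
  obtain ⟨k, -, hk⟩ := hpig
  obtain ⟨a, b, c, ha, hb, hc, hab, hac, hbc⟩ := Finset.two_lt_card_iff.mp hk
  simp only [Finset.mem_filter, Finset.mem_univ, true_and] at ha hb hc
  set K : Fin 9 := (![6,7,8] : Fin 3 → Fin 9) k with hKdef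
  have hra : ((a:ℕ):ℝ) ≠ ((b:ℕ):ℝ) := by
    intro h; exact hab (Fin.ext (Nat.cast_injective h))
  have hrac : ((a:ℕ):ℝ) ≠ ((c:ℕ):ℝ) := by
    intro h; exact hac (Fin.ext (Nat.cast_injective h))
  have hrbc : ((b:ℕ):ℝ) ≠ ((c:ℕ):ℝ) := by
    intro h; exact hbc (Fin.ext (Nat.cast_injective h))
  have ea := hF a; rw [ha] at ea; rw [hexp] at ea
  have eb := hF b; rw [hb] at eb; rw [hexp] at eb
  have ec := hF c; rw [hc] at ec; rw [hexp] at ec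
  obtain ⟨hA, hB, hC⟩ := quad_eq_zero hra hrac hrbc ea eb ec
  have h7K : g 7 K = 0 := by
    rcases mul_eq_zero.mp (neg_eq_zero.mp hA) with h | h
    · exact absurd h htne
    · exact h
  have h6K : g 6 K = 0 := by
    rcases mul_eq_zero.mp hB with h | h
    · exact absurd h hc3'
    · exact h
  have h8K : g 8 K = 0 := by
    rcases mul_eq_zero.mp (neg_eq_zero.mp hC) with h | h
    · exact absurd h hc3'
    · exact h
  have hKor : K = 6 ∨ K = 7 ∨ K = 8 := by
    rw [hKdef]
    fin_cases k
    · exact Or.inl rfl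
    · exact Or.inr (Or.inl rfl)
    · exact Or.inr (Or.inr rfl)
  have hcolzero : ∀ i : Fin 9, g i K = 0 := by
    intro i
    by_cases h6' : i = 6
    · rw [h6']; exact h6K
    by_cases h7' : i = 7
    · rw [h7']; exact h7K
    by_cases h8' : i = 8
    · rw [h8']; exact h8K
    exact hgcol K hKor i h6' h7' h8'
  have hgeK : g *ᵥ e K = 0 := by
    funext i
    rw [hcolentry]
    exact hcolzero i
  have heK : e K = 0 := by
    have h1 : g⁻¹ *ᵥ (g *ᵥ e K) = e K := by
      rw [Matrix.mulVec_mulVec, hinvg, Matrix.one_mulVec]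
    rw [hgeK, Matrix.mulVec_zero] at h1
    exact h1.symm
  have hone : (1:ℝ) = 0 := by
    have h2 := congrFun heK K
    rwa [e, Pi.single_eq_same] at h2
  exact one_ne_zero hone
end
end

section
/- Let A = diag(-1,-1,1,1,0,0,1,-1,0) and for s ∈ ℝ let φ_s = exp(-sA) = diag(e^s, e^s, e^{-s}, e^{-s}, 1, 1, e^{-s}, e^s, 1) ∈ GL₉(ℝ). Then for every t ∈ ℝ, the brackets φ_s·μ̃_t converge to μ_t as s → ∞ (convergence in the finite-dimensional space of skew-symmetric bilinear maps ℝ⁹×ℝ⁹→ℝ⁹); in particular μ_t lies in the closure of the GL₉(ℝ)-orbit of μ̃_t under the action (g·μ)(X,Y) = g μ(g⁻¹X, g⁻¹Y). -/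
open Matrix Finset Real Filter

noncomputable section

/-- `φ_s = exp(-sA)` for `A = diag(-1,-1,1,1,0,0,1,-1,0)`. -/
def phi (s : ℝ) : Matrix (Fin 9) (Fin 9) ℝ :=
  Matrix.diagonal ![Real.exp s, Real.exp s, Real.exp (-s), Real.exp (-s), 1, 1,
    Real.exp (-s), Real.exp s, 1]


/-! ### Auxiliary lemmas -/

lemma vec9_apply (a₀ a₁ a₂ a₃ a₄ a₅ a₆ a₇ a₈ : ℝ) :
    ![a₀,a₁,a₂,a₃,a₄,a₅,a₆,a₇,a₈] 0 = a₀ ∧ ![a₀,a₁,a₂,a₃,a₄,a₅,a₆,a₇,a₈] 1 = a₁ ∧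
    ![a₀,a₁,a₂,a₃,a₄,a₅,a₆,a₇,a₈] 2 = a₂ ∧ ![a₀,a₁,a₂,a₃,a₄,a₅,a₆,a₇,a₈] 3 = a₃ ∧
    ![a₀,a₁,a₂,a₃,a₄,a₅,a₆,a₇,a₈] 4 = a₄ ∧ ![a₀,a₁,a₂,a₃,a₄,a₅,a₆,a₇,a₈] 5 = a₅ ∧
    ![a₀,a₁,a₂,a₃,a₄,a₅,a₆,a₇,a₈] 6 = a₆ ∧ ![a₀,a₁,a₂,a₃,a₄,a₅,a₆,a₇,a₈] 7 = a₇ ∧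
    ![a₀,a₁,a₂,a₃,a₄,a₅,a₆,a₇,a₈] 8 = a₈ :=
  ⟨rfl, rfl, rfl, rfl, rfl, rfl, rfl, rfl, rfl⟩

lemma elemSum (X Y : Fin 9 → ℝ) (v : ℝ) (a b c k : Fin 9) :
    ∑ i, ∑ j, X i * Y j * (if i = a ∧ j = b ∧ k = c then v else 0)
      = if k = c then X a * Y b * v else 0 := by
  rw [Finset.sum_eq_single a]
  · rw [Finset.sum_eq_single b]
    · by_cases h : k = c <;> simp [h]
    · intro j _ hj; simp [hj]
    · simp
  · intro i _ hi; simp [hi]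
  · simp

lemma elemSum' (X Y : Fin 9 → ℝ) (v : ℝ) (a b c k : Fin 9) :
    ∑ i, ∑ j, X i * Y j * (if j = a ∧ i = b ∧ k = c then v else 0)
      = if k = c then X b * Y a * v else 0 := by
  rw [Finset.sum_eq_single b]
  · rw [Finset.sum_eq_single a]
    · by_cases h : k = c <;> simp [h]
    · intro j _ hj; simp [hj]
    · simp
  · intro i _ hi; simp [hi]
  · simp

lemma mu_apply (t : ℝ) (X Y : Fin 9 → ℝ) (k : Fin 9) : mu t X Y k =
    (if k = 6 then (X 4 * Y 3 - X 3 * Y 4) + t * (X 2 * Y 5 - X 5 * Y 2) else 0) +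
    (if k = 7 then (X 0 * Y 5 - X 5 * Y 0) + t * (X 4 * Y 1 - X 1 * Y 4) else 0) +
    (if k = 8 then (X 2 * Y 1 - X 1 * Y 2) + t * (X 0 * Y 3 - X 3 * Y 0) else 0) := by
  simp only [mu, muC, muHalf, mul_sub, mul_add, Finset.sum_sub_distrib, Finset.sum_add_distrib,
    elemSum, elemSum']
  by_cases h6 : k = 6 <;> by_cases h7 : k = 7 <;> by_cases h8 : k = 8 <;>
    simp [h6, h7, h8] <;> ring

lemma muTilde_apply (t : ℝ) (X Y : Fin 9 → ℝ) (k : Fin 9) : muTilde t X Y k =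
    mu t X Y k + (if k = 6 then X 0 * Y 1 - X 1 * Y 0 else 0) := by
  simp only [muTilde, mu, muTildeC, muTildeHalf, muC, muHalf, mul_sub, mul_add,
    Finset.sum_sub_distrib, Finset.sum_add_distrib, elemSum, elemSum']
  by_cases h6 : k = 6 <;> simp [h6] <;> ring

lemma phi_mul_phi_neg (s : ℝ) : phi s * phi (-s) = 1 := by
  have hv : (fun i : Fin 9 => (![Real.exp s, Real.exp s, Real.exp (-s), Real.exp (-s), 1, 1,
      Real.exp (-s), Real.exp s, 1] : Fin 9 → ℝ) i * (![Real.exp (-s), Real.exp (-s),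
      Real.exp (-(-s)), Real.exp (-(-s)), 1, 1, Real.exp (-(-s)), Real.exp (-s), 1] :
      Fin 9 → ℝ) i) = 1 := by
    funext i
    fin_cases i <;> norm_num [← Real.exp_add]
  rw [phi, phi, Matrix.diagonal_mul_diagonal]
  rw [hv]; exact Matrix.diagonal_one

lemma phi_inv (s : ℝ) : (phi s)⁻¹ = phi (-s) := Matrix.inv_eq_right_inv (phi_mul_phi_neg s)

lemma isUnit_phi (s : ℝ) : IsUnit (phi s) := by
  refine ⟨⟨phi s, phi (-s), phi_mul_phi_neg s, ?_⟩, rfl⟩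
  have h := phi_mul_phi_neg (-s)
  rwa [neg_neg] at h

lemma act_phi_eq (t s : ℝ) : act (phi s) (muTilde t) =
    fun X Y k => mu t X Y k +
      Real.exp (-(3*s)) * ((X 0 * Y 1 - X 1 * Y 0) * (if k = 6 then (1:ℝ) else 0)) := by
  funext X Y k
  have h3 : Real.exp (-(3*s)) = Real.exp (-s) * Real.exp (-s) * Real.exp (-s) := by
    rw [← Real.exp_add, ← Real.exp_add]; ring_nf
  have hne := Real.exp_ne_zero s
  simp only [act]
  rw [phi_inv]
  simp only [phi, Matrix.mulVec_diagonal]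
  rw [muTilde_apply, mu_apply, mu_apply]
  simp only [Matrix.mulVec_diagonal, neg_neg]
  obtain ⟨e0, e1, e2, e3, e4, e5, e6, e7, e8⟩ := vec9_apply (Real.exp (-s)) (Real.exp (-s))
    (Real.exp s) (Real.exp s) 1 1 (Real.exp s) (Real.exp (-s)) 1
  obtain ⟨f0, f1, f2, f3, f4, f5, f6, f7, f8⟩ := vec9_apply (Real.exp s) (Real.exp s)
    (Real.exp (-s)) (Real.exp (-s)) 1 1 (Real.exp (-s)) (Real.exp s) 1
  simp only [e0, e1, e2, e3, e4, e5, e6, e7, e8]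
  by_cases h6 : k = 6
  · subst h6
    rw [f6]
    simp
    try rw [h3]
    try simp only [Real.exp_neg]
    try field_simp
    try ring
  · by_cases h7 : k = 7
    · subst h7
      rw [f7]
      simp
      try simp only [Real.exp_neg]
      try field_simp
      try ring
    · by_cases h8 : k = 8
      · subst h8
        rw [f8]
        simp
        try simp only [Real.exp_neg]
        try field_simp
        try ring
      · simp [h6, h7, h8]

/-- `φ_s·μ̃_t → μ_t` as `s → ∞`; in particular `μ_t` lies in the closure of
the `GL₉(ℝ)`-orbit of `μ̃_t`. -/
theorem statement12 (t : ℝ) :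
    Tendsto (fun s : ℝ => act (phi s) (muTilde t)) atTop (nhds (mu t)) ∧
    mu t ∈ closure {ν : NilBracket |
      ∃ g : Matrix (Fin 9) (Fin 9) ℝ, IsUnit g ∧ ν = act g (muTilde t)} := by
  have key : Tendsto (fun s : ℝ => act (phi s) (muTilde t)) atTop (nhds (mu t)) := by
    rw [tendsto_pi_nhds]
    intro X
    rw [tendsto_pi_nhds]
    intro Y
    rw [tendsto_pi_nhds]
    intro k
    have h0 : Tendsto (fun s : ℝ => Real.exp (-(3*s))) atTop (nhds 0) := by
      apply Real.tendsto_exp_atBot.comp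
      have h1 : Tendsto (fun s : ℝ => (3:ℝ) * s) atTop atTop :=
        Tendsto.const_mul_atTop (by norm_num) tendsto_id
      exact tendsto_neg_atTop_atBot.comp h1
    have h2 := (h0.mul_const ((X 0 * Y 1 - X 1 * Y 0) * (if k = 6 then (1:ℝ) else 0))).const_add
      (mu t X Y k)
    simp only [zero_mul, add_zero] at h2
    refine h2.congr fun s => ?_
    rw [act_phi_eq]
  refine ⟨key, mem_closure_of_tendsto key ?_⟩
  filter_upwards with s
  exact ⟨phi s, isUnit_phi s, rfl⟩
end
end

section
/- For every t ∈ ℝ and all x,y,z ∈ ℝ, the determinant of the 6×6 matrix J_{μ̄_t}(x·e₇ + y·e₈ + z·e₉) equals (t·(x³+y³) − (t³+1)·xyz)² (equivalently, the Pfaffian form of n̄_t = (ℝ⁹, μ̄_t) is f_{μ̄_t}(x,y,z) = t(x³+y³) − (t³+1)xyz up to sign). -/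
open Matrix Finset Real Filter

noncomputable section

lemma muBar_e (t : ℝ) (i j k : Fin 9) : muBar t (e i) (e j) k = muBarC t i j k := by
  simp [muBar, e, Pi.single_apply, ite_mul, Finset.sum_ite_eq]

set_option maxHeartbeats 2000000 in
lemma Jmat_muBar_eq (t x y z : ℝ) :
    Jmat (muBar t) x y z =
      !![0, -x, 0, -(t*z), 0, -y;
         x, 0, z, 0, t*y, 0;
         0, -z, 0, -y, 0, -(t*x);
         t*z, 0, y, 0, x, 0;
         0, -(t*y), 0, -x, 0, 0;
         y, 0, t*x, 0, 0, 0] := by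
  ext a b
  fin_cases a <;> fin_cases b <;>
    norm_num [Jmat, E, muBar_e, muBarC, muBarHalf, muTildeHalf, muHalf, Fin.ext_iff,
      show ((3:Fin 9):ℕ) = 3 from rfl, show ((4:Fin 9):ℕ) = 4 from rfl,
      show ((5:Fin 9):ℕ) = 5 from rfl, show ((6:Fin 9):ℕ) = 6 from rfl,
      show ((7:Fin 9):ℕ) = 7 from rfl, show ((8:Fin 9):ℕ) = 8 from rfl]

lemma vec6_at3 (a b c d f g : ℝ) : ![a,b,c,d,f,g] (⟨3, by norm_num⟩ : Fin 6) = d := rfl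
lemma vec5_at3 (a b c d f : ℝ) : ![a,b,c,d,f] (⟨3, by norm_num⟩ : Fin 5) = d := rfl

set_option maxRecDepth 10000 in
set_option maxHeartbeats 2000000 in
/-- `det J_{μ̄_t}(x e₇ + y e₈ + z e₉) = (t(x³+y³) - (t³+1) xyz)²`. -/
theorem statement15 (t x y z : ℝ) :
    (Jmat (muBar t) x y z).det = (t*(x^3 + y^3) - (t^3+1)*(x*y*z))^2 := by
  rw [Jmat_muBar_eq]
  simp [Matrix.det_succ_row_zero, Fin.sum_univ_succ, Fin.succAbove, Fin.lt_def,
    Fin.castSucc, Fin.castAdd, Fin.castLE,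
    show ((3:Fin 4):ℕ) = 3 from rfl, show ((3:Fin 5):ℕ) = 3 from rfl,
    vec6_at3, vec5_at3, -Fin.val_fin_lt, -Fin.lt_def]
  ring
end
end

section
/- For every t ∈ (1,∞), the zero set Z = {(x,y,z) ∈ ℝ³ : t(x³+y³) − (t³+1)xyz = 0} contains no 2-dimensional linear subspace of ℝ³ (equivalently, the cubic t(x³+y³) − (t³+1)xyz has no real linear factor). -/
open Matrix Finset Real Filter

noncomputable section

/-- for `t ∈ (1,∞)`, the zero set of `p_t(x,y,z) = t(x³+y³) - (t³+1)xyz`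
contains no 2-dimensional linear subspace of `ℝ³`. -/
theorem statement16 (t : ℝ) (ht : t ∈ Set.Ioi (1:ℝ)) :
    ¬ ∃ W : Submodule ℝ (Fin 3 → ℝ), Module.finrank ℝ W = 2 ∧
      ∀ v ∈ W, t * ((v 0)^3 + (v 1)^3) - (t^3+1) * (v 0 * v 1 * v 2) = 0 := by
  rintro ⟨W, hW2, hWp⟩
  have ht1 : (1:ℝ) < t := ht
  have htpos : 0 < t := lt_trans one_pos ht1
  -- For each coordinate i, W contains a nonzero vector with i-th coordinate 0
  have key : ∀ i : Fin 3, ∃ u : Fin 3 → ℝ, u ∈ W ∧ u ≠ 0 ∧ u i = 0 := by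
    intro i
    set f : W →ₗ[ℝ] ℝ := (LinearMap.proj i).comp W.subtype with hf
    have hker : LinearMap.ker f ≠ ⊥ := by
      intro h
      have hinj : Function.Injective f := LinearMap.ker_eq_bot.mp h
      have hle := LinearMap.finrank_le_finrank_of_injective hinj
      rw [hW2, Module.finrank_self] at hle
      omega
    obtain ⟨x, hx, hx0⟩ := (Submodule.ne_bot_iff _).mp hker
    exact ⟨x.1, x.2, fun h => hx0 (Subtype.ext h), hx⟩
  obtain ⟨u, huW, hune, hu2⟩ := key 2
  obtain ⟨w, hwW, hwne, hw0⟩ := key 0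
  have hu := hWp u huW
  have hw := hWp w hwW
  rw [hu2] at hu
  rw [hw0] at hw
  -- from hu : t * ((u 0)^3 + (u 1)^3) = 0 we get u 1 = - u 0
  have hcubes : (u 0)^3 + (u 1)^3 = 0 := by
    have h' : t * ((u 0)^3 + (u 1)^3) = 0 := by linarith [hu]
    exact (mul_eq_zero.mp h').resolve_left (ne_of_gt htpos)
  have hinj3 : Function.Injective (fun a : ℝ => a ^ 3) :=
    (Odd.strictMono_pow (R := ℝ) ⟨1, by norm_num⟩).injective
  have hu1 : u 1 = - u 0 := by
    have : (u 1) ^ 3 = (- u 0) ^ 3 := by ring_nf; linarith [hcubes]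
    exact hinj3 this
  -- from hw : t * (w 1)^3 = 0 we get w 1 = 0
  have hw1 : w 1 = 0 := by
    have h' : (w 1) ^ 3 = 0 := by
      have : t * (w 1)^3 = 0 := by linarith [hw]
      exact (mul_eq_zero.mp this).resolve_left (ne_of_gt htpos)
    exact pow_eq_zero_iff (by norm_num) |>.mp h'
  have hu0 : u 0 ≠ 0 := by
    intro h0
    apply hune
    funext i
    fin_cases i <;> simp [h0, hu1, hu2]
  have hw2 : w 2 ≠ 0 := by
    intro h2
    apply hwne
    funext i
    fin_cases i <;> simp [hw0, hw1, h2]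
  -- the vector (1, -1, 1) lies in W
  set v : Fin 3 → ℝ := (u 0)⁻¹ • u + (w 2)⁻¹ • w with hv
  have hvW : v ∈ W := W.add_mem (W.smul_mem _ huW) (W.smul_mem _ hwW)
  have hv0 : v 0 = 1 := by simp [hv, hw0, inv_mul_cancel₀ hu0]
  have hv1 : v 1 = -1 := by
    simp [hv, hu1, hw1]
    field_simp
  have hv2 : v 2 = 1 := by simp [hv, hu2, inv_mul_cancel₀ hw2]
  have := hWp v hvW
  rw [hv0, hv1, hv2] at this
  nlinarith [this, htpos, pow_pos htpos 3]
end
end
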